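/- For the Heisenberg pairing function P^{ij}(μ,λ) = η_{ij} μ^{-m_i/h} λ^{-m_j/h} ((m_i/h)μ + (m_j/h)λ)/(μ-λ)², valid for |λ| < |μ|, setting s = μ - λ, one has the expansion P^{ij}(μ,λ) = η_{ij}/s² + Σ_{k≥0} P_k^{ij}(λ) s^k, where P_k^{ij}(λ) = η_{ij} (-1)^k (1 - m_i/h) · Γ(m_i/h + k + 1)/(k!(k+2)Γ(m_i/h)) · λ^{-k-2}. -/

import Mathlib

open Real

section Aux
open Set Finset Filter Topology

lemma iter_formula (p x : ℝ) (hx : 0 < x) (n : ℕ) :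
    Set.EqOn (iteratedDerivWithin n (fun t => (1+t) ^ p) (Set.Icc 0 x))
      (fun t => (∏ i ∈ Finset.range n, (p - i)) * (1+t) ^ (p - n)) (Set.Icc 0 x) := by
  induction n with
  | zero => intro y hy; simp [iteratedDerivWithin_zero]
  | succ n ih =>
    intro y hy
    have hud : UniqueDiffOn ℝ (Set.Icc (0:ℝ) x) := uniqueDiffOn_Icc hx
    have h1y : (0:ℝ) < 1 + y := by have := hy.1; linarith
    rw [iteratedDerivWithin_succ]
    rw [derivWithin_congr ih (ih hy)]
    have hadd : HasDerivAt (fun t : ℝ => 1 + t) 1 y := by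
      simpa using (hasDerivAt_id y).const_add (1:ℝ)
    have hD : HasDerivAt (fun t : ℝ => (1+t) ^ (p - n))
        ((p - n) * (1+y) ^ (p - n - 1) * 1) y :=
      (Real.hasDerivAt_rpow_const (Or.inl h1y.ne')).comp y hadd
    have hD2 : HasDerivAt (fun t : ℝ => (∏ i ∈ Finset.range n, (p - i)) * (1+t) ^ (p - n))
        ((∏ i ∈ Finset.range n, (p - i)) * ((p - n) * (1+y) ^ (p - n - 1) * 1)) y :=
      hD.const_mul _
    rw [hD2.hasDerivWithinAt.derivWithin (hud.uniqueDiffWithinAt hy)]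
    rw [Finset.prod_range_succ]
    push_cast
    rw [show p - (n:ℝ) - 1 = p - ((n:ℝ)+1) by ring]
    ring

lemma binomial_hasSum (p x : ℝ) (hp : p < 0) (hx0 : 0 < x) (hx1 : x < 1) :
    HasSum (fun k => (∏ i ∈ Finset.range k, (p - i)) / (k.factorial : ℝ) * x ^ k)
      ((1+x) ^ p) := by
  set u : ℕ → ℝ := fun k => (∏ i ∈ Finset.range k, (p - i)) / (k.factorial : ℝ) * x ^ k with hu
  have hune : ∀ k, u k ≠ 0 := by
    intro k
    apply mul_ne_zero (div_ne_zero _ (Nat.cast_ne_zero.mpr k.factorial_ne_zero))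
      (pow_ne_zero _ hx0.ne')
    exact Finset.prod_ne_zero_iff.mpr fun i _ => by
      have : (0:ℝ) ≤ i := Nat.cast_nonneg i; intro h; nlinarith [sub_eq_zero.mp h]
  have hratio : ∀ n : ℕ, ‖u (n+1)‖ / ‖u n‖ = ((n:ℝ) - p) * x / (n+1) := by
    intro n
    have h1 : u (n+1) = u n * ((p - n) / (n+1) * x) := by
      simp only [hu, Finset.prod_range_succ, Nat.factorial_succ, pow_succ]
      push_cast
      field_simp
    rw [h1, norm_mul, mul_comm, mul_div_assoc,
      div_self (by simpa using norm_ne_zero_iff.mpr (hune n)), mul_one]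
    rw [Real.norm_eq_abs, abs_mul, abs_div, abs_of_pos hx0,
      abs_of_neg (by nlinarith [Nat.cast_nonneg (α := ℝ) n] : p - (n:ℝ) < 0),
      abs_of_pos (by positivity : (0:ℝ) < (n:ℝ)+1)]
    ring
  have htend : Tendsto (fun n : ℕ => ‖u (n+1)‖ / ‖u n‖) atTop (𝓝 x) := by
    have h0 : Tendsto (fun n : ℕ => x - (p+1)*x * (1/((n:ℝ)+1))) atTop (𝓝 (x - (p+1)*x*0)) :=
      tendsto_const_nhds.sub (tendsto_one_div_add_atTop_nhds_zero_nat.const_mul _)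
    simp only [mul_zero, sub_zero] at h0
    refine h0.congr fun n => ?_
    rw [hratio n]
    have : ((n:ℝ)+1) ≠ 0 := by positivity
    field_simp
    ring
  have hsumnorm : Summable fun k => ‖u k‖ := by
    apply summable_of_ratio_test_tendsto_lt_one hx1
      (Eventually.of_forall fun n => by simpa using (hune n))
    refine htend.congr fun n => ?_
    simp [Real.norm_eq_abs, abs_abs]
  have hsum : Summable u := hsumnorm.of_norm
  -- Taylor remainder bound
  have hud : UniqueDiffOn ℝ (Set.Icc (0:ℝ) x) := uniqueDiffOn_Icc hx0
  have key : ∀ n : ℕ, ‖(∑ k ∈ Finset.range (n+1), u k) - (1+x)^p‖ ≤ ‖u (n+1)‖ := by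
    intro n
    have hf : ContDiffOn ℝ n (fun t => (1+t)^p) (Set.Icc 0 x) := by
      intro t ht
      have h1t : (1:ℝ) + t ≠ 0 := by have := ht.1; positivity
      exact ((Real.contDiffAt_rpow_const_of_ne h1t).comp t
        ((contDiff_const.add contDiff_id).contDiffAt)).contDiffWithinAt
    have hf' : DifferentiableOn ℝ
        (iteratedDerivWithin n (fun t => (1+t)^p) (Set.Icc 0 x)) (Set.Ioo 0 x) := by
      intro t ht
      have h1t : (0:ℝ) < 1 + t := by have := ht.1; linarith
      have hadd : HasDerivAt (fun t : ℝ => 1 + t) 1 t := by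
        simpa using (hasDerivAt_id t).const_add (1:ℝ)
      have hD : HasDerivAt (fun y : ℝ => (∏ i ∈ Finset.range n, (p - i)) * (1+y) ^ (p - n))
          ((∏ i ∈ Finset.range n, (p - i)) * ((p - n) * (1+t) ^ (p - n - 1) * 1)) t :=
        ((Real.hasDerivAt_rpow_const (Or.inl h1t.ne')).comp t hadd).const_mul _
      exact hD.differentiableAt.differentiableWithinAt.congr
        (fun y hy => iter_formula p x hx0 n (Set.Ioo_subset_Icc_self hy))
        (iter_formula p x hx0 n (Set.Ioo_subset_Icc_self ht))
    obtain ⟨x', hx', heq⟩ := taylor_mean_remainder_lagrange hx0.ne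
      (by rwa [Set.uIcc_of_le hx0.le]) (by rwa [Set.uIcc_of_le hx0.le, Set.uIoo_of_le hx0.le])
    rw [Set.uIcc_of_le hx0.le] at heq
    rw [Set.uIoo_of_le hx0.le] at hx'
    have htay : taylorWithinEval (fun t => (1+t)^p) n (Set.Icc 0 x) 0 x
        = ∑ k ∈ Finset.range (n+1), u k := by
      rw [taylor_within_apply]
      refine Finset.sum_congr rfl fun k _ => ?_
      rw [iter_formula p x hx0 k (Set.left_mem_Icc.mpr hx0.le)]
      simp [hu, Real.one_rpow, smul_eq_mul]
      ring
    rw [htay] at heq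
    have hx'Icc : x' ∈ Set.Icc (0:ℝ) x := Set.Ioo_subset_Icc_self hx'
    rw [iter_formula p x hx0 (n+1) hx'Icc] at heq
    have h1x' : (1:ℝ) ≤ 1 + x' := by have := hx'Icc.1; linarith
    have hexp : p - ((n+1:ℕ):ℝ) ≤ 0 := by
      have h0 : (0:ℝ) ≤ ((n+1:ℕ):ℝ) := Nat.cast_nonneg _
      linarith
    have hb : (1+x') ^ (p - ((n+1:ℕ):ℝ)) ≤ 1 :=
      Real.rpow_le_one_of_one_le_of_nonpos h1x' hexp
    have hb0 : 0 < (1+x') ^ (p - ((n+1:ℕ):ℝ)) := Real.rpow_pos_of_pos (by linarith) _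
    have hnu : ‖u (n+1)‖ = |∏ i ∈ Finset.range (n+1), (p - i)| * x^(n+1) /
        ((n+1).factorial : ℝ) := by
      rw [hu]
      rw [Real.norm_eq_abs, abs_mul, abs_div, abs_pow, abs_of_pos hx0, Nat.abs_cast]
      ring
    rw [norm_sub_rev, heq, Real.norm_eq_abs, sub_zero]
    have habs : |(∏ i ∈ Finset.range (n+1), (p - i)) * (1+x') ^ (p - ((n+1:ℕ):ℝ)) * x^(n+1)
        / ((n+1).factorial : ℝ)|
        = |∏ i ∈ Finset.range (n+1), (p - i)| * ((1+x') ^ (p - ((n+1:ℕ):ℝ))) * x^(n+1)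
          / ((n+1).factorial : ℝ) := by
      rw [abs_div, abs_mul, abs_mul, abs_of_pos hb0, abs_pow, abs_of_pos hx0, Nat.abs_cast]
    rw [habs, hnu]
    rw [div_le_div_iff_of_pos_right (by positivity : (0:ℝ) < ((n+1).factorial : ℝ))]
    nlinarith [mul_nonneg (sub_nonneg.mpr hb)
      (mul_nonneg (abs_nonneg (∏ i ∈ Finset.range (n+1), (p - (i:ℝ)))) (pow_pos hx0 (n+1)).le)]
  have hnorm0 : Tendsto (fun n : ℕ => ‖u (n+1)‖) atTop (𝓝 0) :=
    hsumnorm.tendsto_atTop_zero.comp (tendsto_add_atTop_nat 1)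
  have hdiff : Tendsto (fun n : ℕ => (∑ k ∈ Finset.range (n+1), u k) - (1+x)^p) atTop (𝓝 0) :=
    squeeze_zero_norm key hnorm0
  have hpart : Tendsto (fun n : ℕ => ∑ k ∈ Finset.range n, u k) atTop (𝓝 ((1+x)^p)) := by
    rw [← tendsto_add_atTop_iff_nat 1]
    simpa using hdiff.add_const ((1+x)^p)
  exact (hasSum_iff_tendsto_nat_of_summable_norm hsumnorm).mpr hpart


lemma gamma_prod (a : ℝ) (ha : 0 < a) (k : ℕ) :
    Real.Gamma (a + k + 1) = (∏ i ∈ Finset.range (k+1), (a + i)) * Real.Gamma a := by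
  induction k with
  | zero => simp [Real.Gamma_add_one ha.ne']
  | succ k ih =>
    rw [Finset.prod_range_succ, show a + ((k+1:ℕ):ℝ) + 1 = (a + k + 1) + 1 by push_cast; ring,
      Real.Gamma_add_one (by positivity), ih]
    push_cast
    ring

lemma prodneg (a : ℝ) (k : ℕ) : ∏ i ∈ Finset.range k, (-a - (i:ℝ))
    = (-1)^k * ∏ i ∈ Finset.range k, (a + i) := by
  rw [show (fun i : ℕ => -a - (i:ℝ)) = fun i : ℕ => (-1) * (a + i) from funext fun i => by ring,
    Finset.prod_mul_distrib, Finset.prod_const, Finset.card_range]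

end Aux

open Set Finset Filter Topology in
/-- Expansion of the propagator `P^{ij}(μ,λ)`: for exponents `m_i + m_j = h`
(`1 ≤ m_i ≤ h-1`), a pairing constant `η`, and `λ > 0`, writing `μ = λ + s`, one
has for all sufficiently small `s > 0`
`P^{ij}(μ,λ) = η/s² + Σ_{k≥0} P_k^{ij}(λ) s^k`, where
`P_k^{ij}(λ) = η (-1)^k (1 - m_i/h) Γ(m_i/h + k + 1)/(k!(k+2)Γ(m_i/h)) λ^{-k-2}`. -/
theorem propagator_expansion
    (hcox mi mj : ℕ) (hmi : 1 ≤ mi) (hmi' : mi ≤ hcox - 1) (hsum : mi + mj = hcox)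
    (η : ℝ) (lam : ℝ) (hlam : 0 < lam) :
    ∃ r > 0, ∀ s : ℝ, 0 < s → s < r →
      η / s ^ 2 +
        ∑' k : ℕ,
          (η * (-1) ^ k * (1 - (mi : ℝ) / hcox) *
            (Real.Gamma ((mi : ℝ) / hcox + k + 1) /
              ((k.factorial : ℝ) * (k + 2) * Real.Gamma ((mi : ℝ) / hcox))) *
            lam ^ (-(k : ℝ) - 2)) * s ^ k
      = η * (lam + s) ^ (-((mi : ℝ) / hcox)) * lam ^ (-((mj : ℝ) / hcox)) *
          (((mi : ℝ) / hcox) * (lam + s) + ((mj : ℝ) / hcox) * lam) /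
          ((lam + s) - lam) ^ 2 := by
  have hc2 : 2 ≤ hcox := by omega
  have hc0 : (0:ℝ) < hcox := by exact_mod_cast (by omega : 0 < hcox)
  set a : ℝ := (mi:ℝ) / hcox with ha
  have ha0 : 0 < a := div_pos (by exact_mod_cast hmi) hc0
  have ha1 : a < 1 := (div_lt_one hc0).mpr (by exact_mod_cast (by omega : mi < hcox))
  have hmjr : (mj:ℝ)/hcox = 1 - a := by
    rw [ha, eq_sub_iff_add_eq, ← add_div, div_eq_one_iff_eq hc0.ne']
    push_cast
    rw [add_comm]
    exact_mod_cast congrArg (Nat.cast : ℕ → ℝ) hsum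
  have hGa : Real.Gamma a ≠ 0 := (Real.Gamma_pos_of_pos ha0).ne'
  refine ⟨lam, hlam, fun s hs hslt => ?_⟩
  set x : ℝ := s / lam with hxdef
  have hx0 : 0 < x := div_pos hs hlam
  have hx1 : x < 1 := (div_lt_one hlam).mpr hslt
  set c : ℕ → ℝ := fun k => (∏ i ∈ Finset.range k, (-a - (i:ℝ))) / (k.factorial : ℝ) with hc
  have H : HasSum (fun k => c k * x ^ k) ((1+x) ^ (-a)) := by
    simpa [hc, sub_eq_add_neg, neg_add] using
      binomial_hasSum (-a) x (neg_neg_iff_pos.mpr ha0) hx0 hx1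
  have H2 : HasSum (fun k => c k * x ^ k * (a*x)) ((1+x)^(-a) * (a*x)) := H.mul_right _
  set w : ℕ → ℝ := fun k => if k = 0 then 0 else c (k-1) * x^(k-1) * (a*x) with hw
  have H3 : HasSum w ((1+x)^(-a) * (a*x)) := by
    have H2' : HasSum (fun n => w (n+1)) ((1+x)^(-a) * (a*x)) := by
      simpa [hw] using H2
    have := (hasSum_nat_add_iff (f := w) 1).mp H2'
    simpa [hw] using this
  have H4 : HasSum (fun k => c k * x^k + w k) ((1+x)^(-a) + (1+x)^(-a) * (a*x)) := H.add H3
  set e : ℕ → ℝ := fun k => c k * x^k + w k with he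
  have H5 : HasSum (fun n => e (n+2))
      (((1+x)^(-a) + (1+x)^(-a) * (a*x)) - ∑ i ∈ Finset.range 2, e i) := by
    rw [hasSum_nat_add_iff (f := e) 2, sub_add_cancel]
    exact H4
  have hsum2 : ∑ i ∈ Finset.range 2, e i = 1 := by
    rw [Finset.sum_range_succ, Finset.sum_range_one]
    simp [he, hw, hc, Finset.prod_range_one]
  rw [hsum2] at H5
  -- coefficient identity
  have claim : ∀ n : ℕ,
      (η * (-1) ^ n * (1 - a) *
        (Real.Gamma (a + n + 1) / ((n.factorial : ℝ) * (n + 2) * Real.Gamma a)) *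
        lam ^ (-(n : ℝ) - 2)) * s ^ n = (η / s^2) * e (n+2) := by
    intro n
    have hfac1 : ((n+1).factorial : ℝ) = ((n:ℝ)+1) * n.factorial := by
      rw [Nat.factorial_succ]; push_cast; ring
    have hfac2 : ((n+2).factorial : ℝ) = ((n:ℝ)+2) * (((n:ℝ)+1) * n.factorial) := by
      rw [Nat.factorial_succ, Nat.factorial_succ]; push_cast; ring
    have hlamr : lam ^ (-(n:ℝ) - 2) = (lam ^ (n+2) : ℝ)⁻¹ := by
      rw [show -(n:ℝ) - 2 = -((n+2:ℕ):ℝ) by push_cast; ring, Real.rpow_neg hlam.le,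
        Real.rpow_natCast]
    have hgp := gamma_prod a ha0 n
    have hen : e (n+2) = ((-1)^(n+2) * ∏ i ∈ Finset.range (n+2), (a + i)) /
          ((n+2).factorial : ℝ) * x^(n+2)
        + ((-1)^(n+1) * ∏ i ∈ Finset.range (n+1), (a + i)) /
          ((n+1).factorial : ℝ) * x^(n+1) * (a*x) := by
      simp only [he, hw, hc]
      rw [prodneg, prodneg]
      norm_num
    rw [hen, Finset.prod_range_succ]
    rw [hgp, hlamr, hxdef]
    have hnf : (n.factorial : ℝ) ≠ 0 := by positivity
    have hfac1' : ((n+1).factorial : ℝ) ≠ 0 := by positivity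
    have hfac2' : ((n+2).factorial : ℝ) ≠ 0 := by positivity
    rw [hfac1, hfac2]
    field_simp
    rw [div_pow, div_pow]
    field_simp
    push_cast
    ring
  have HA := H5.mul_left (η / s^2)
  rw [← funext claim] at HA
  rw [HA.tsum_eq]
  rw [hmjr, show lam + s - lam = s from by ring]
  have hls : lam + s = lam * (1+x) := by rw [hxdef]; field_simp
  rw [hls, Real.mul_rpow hlam.le (by positivity : (0:ℝ) ≤ 1+x)]
  set B : ℝ := (1+x) ^ (-a) with hB
  have hcoef : a*(lam*(1+x)) + (1-a)*lam = lam * (1 + a*x) := by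
    rw [hxdef]; field_simp; ring
  rw [hcoef]
  have hlp : lam ^ (-a) * lam ^ (-(1-a)) * lam = 1 := by
    rw [← Real.rpow_add hlam, show -a + -(1-a) = -1 from by ring, Real.rpow_neg_one,
      inv_mul_cancel₀ hlam.ne']
  have hnum : η * (lam^(-a) * B) * lam^(-(1-a)) * (lam*(1+a*x)) = η * B * (1 + a*x) := by
    calc η * (lam^(-a) * B) * lam^(-(1-a)) * (lam*(1+a*x))
        = (lam^(-a) * lam^(-(1-a)) * lam) * (η * B * (1+a*x)) := by ring
      _ = η * B * (1 + a*x) := by rw [hlp]; ring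
  rw [hnum]
  have hs2 : s^2 ≠ 0 := by positivity
  field_simp
  ring
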